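/- Let n ≥ 1, d ≥ 1, c > 0, let 1 ≤ s ≤ n, let m_1*, …, m_s* be real target moments, and let ε_1, …, ε_s > 0. Let F = {x : m_k(x) > m_k* for all k = 1,…,s} and V = f_s + b_s, where f_s(x) = Σ_{k=1}^{s} (1/(4k))·(m_k(x) − m_k*)² and b_s(x) = Σ_{k=1}^{s} (ε_k/(4k))·(m_k(x) − m_k*)^{−2}. Then for every real number C, the sublevel set {x ∈ F : V(x) ≤ C} is a closed subset of the space of all configurations (the barrier b_s blows up on the boundary of F, so sublevel sets of V cannot touch it). -/

import Mathlib

open Matrix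

/-- The weighted adjacency matrix of a configuration `x : Fin n → Fin d → ℝ` of `n` robots
in `ℝ^d`: `A(x)_{ij} = exp(−c Σ_r |x i r − x j r|)` for `i ≠ j` and `A(x)_{ii} = 0`. -/
noncomputable def adjMat {n d : ℕ} (c : ℝ) (x : Fin n → Fin d → ℝ) :
    Matrix (Fin n) (Fin n) ℝ :=
  Matrix.of fun i j =>
    if i = j then 0 else Real.exp (-c * ∑ r, |x i r - x j r|)

/-- The `k`-th spectral moment `m_k(x) = (1/n) tr(A(x)^k)`. -/
noncomputable def momentC {n d : ℕ} (c : ℝ) (k : ℕ) (x : Fin n → Fin d → ℝ) : ℝ :=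
  (1 / (n : ℝ)) * ((adjMat c x) ^ k).trace

lemma continuous_adjMat {n d : ℕ} (c : ℝ) : Continuous (adjMat (n := n) (d := d) c) := by
  apply continuous_pi; intro i
  apply continuous_pi; intro j
  by_cases h : i = j
  · simpa [adjMat, h] using continuous_const
  · simp only [adjMat, Matrix.of_apply, if_neg h]
    exact (Real.continuous_exp.comp (continuous_const.mul
      (continuous_finset_sum _ fun r _ =>
        ((continuous_apply_apply i r).sub (continuous_apply_apply j r)).abs)))

lemma continuous_momentC {n d : ℕ} (c : ℝ) (k : ℕ) :
    Continuous (momentC (n := n) (d := d) c k) :=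
  continuous_const.mul (((continuous_adjMat c).pow k).matrix_trace)

/-- With `F = {x : m_k(x) > m_k* ∀ k = 1,…,s}`, the cost
`f_s(x) = Σ_{k=1}^s (1/(4k)) (m_k(x) − m_k*)²` and the barrier
`b_s(x) = Σ_{k=1}^s (ε_k/(4k)) (m_k(x) − m_k*)⁻²` (with `ε_k > 0`), every sublevel set
`{x ∈ F : f_s(x) + b_s(x) ≤ C}` is closed in the space of all configurations. -/
theorem sublevel_set_isClosed (n d : ℕ) (hn : 1 ≤ n) (hd : 1 ≤ d)
    (c : ℝ) (hc : 0 < c) (s : ℕ) (hs1 : 1 ≤ s) (hsn : s ≤ n) (mstar ε : ℕ → ℝ)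
    (hε : ∀ k ∈ Finset.Icc 1 s, 0 < ε k) (C : ℝ) :
    IsClosed {x : Fin n → Fin d → ℝ |
      (∀ k ∈ Finset.Icc 1 s, mstar k < momentC c k x) ∧
      (∑ k ∈ Finset.Icc 1 s, (1 / (4 * (k : ℝ))) * (momentC c k x - mstar k) ^ 2) +
        (∑ k ∈ Finset.Icc 1 s, (ε k / (4 * (k : ℝ))) * ((momentC c k x - mstar k) ^ 2)⁻¹)
        ≤ C} := by
  have hkpos : ∀ k ∈ Finset.Icc 1 s, (0:ℝ) < (k:ℝ) := by
    intro k hk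
    exact_mod_cast Nat.lt_of_lt_of_le Nat.zero_lt_one (Finset.mem_Icc.mp hk).1
  by_cases hC : 0 < C
  · set δ : ℕ → ℝ := fun k => Real.sqrt (ε k / (4 * k * C)) with hδ
    have hδpos : ∀ k ∈ Finset.Icc 1 s, 0 < δ k := fun k hk =>
      Real.sqrt_pos.mpr (div_pos (hε k hk)
        (by have := hkpos k hk; positivity))
    set K : Set (Fin n → Fin d → ℝ) :=
      {x | ∀ k ∈ Finset.Icc 1 s, mstar k + δ k ≤ momentC c k x} with hKdef
    set g : (Fin n → Fin d → ℝ) → ℝ := fun x =>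
      (∑ k ∈ Finset.Icc 1 s, (1 / (4 * (k : ℝ))) * (momentC c k x - mstar k) ^ 2) +
        (∑ k ∈ Finset.Icc 1 s, (ε k / (4 * (k : ℝ))) * ((momentC c k x - mstar k) ^ 2)⁻¹)
      with hg
    have hset : {x : Fin n → Fin d → ℝ |
        (∀ k ∈ Finset.Icc 1 s, mstar k < momentC c k x) ∧ g x ≤ C}
        = K ∩ g ⁻¹' Set.Iic C := by
      ext x
      simp only [Set.mem_setOf_eq, Set.mem_inter_iff, Set.mem_preimage, Set.mem_Iic, hKdef]
      constructor
      · rintro ⟨h1, h2⟩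
        refine ⟨fun k hk => ?_, h2⟩
        have hm := h1 k hk
        have hmt : 0 < momentC c k x - mstar k := sub_pos.mpr hm
        have ht : 0 < (momentC c k x - mstar k) ^ 2 := by positivity
        have hfn : 0 ≤ ∑ k ∈ Finset.Icc 1 s,
            (1 / (4 * (k : ℝ))) * (momentC c k x - mstar k) ^ 2 := by
          apply Finset.sum_nonneg
          intro j hj
          have := hkpos j hj
          positivity
        have hterm : (ε k / (4 * (k : ℝ))) * ((momentC c k x - mstar k) ^ 2)⁻¹ ≤ C := by
          have hle : ∑ j ∈ Finset.Icc 1 s,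
              (ε j / (4 * (j : ℝ))) * ((momentC c j x - mstar j) ^ 2)⁻¹ ≤ C := by
            have := h2; simp only [hg] at this; linarith
          refine le_trans (Finset.single_le_sum
            (f := fun j => ε j / (4 * (j : ℝ)) * ((momentC c j x - mstar j) ^ 2)⁻¹)
            (fun j hj => ?_) hk) hle
          have hj1 := hkpos j hj
          have hj2 := (hε j hj).le
          positivity
        have hCt : ε k / (4 * (k : ℝ)) ≤ C * (momentC c k x - mstar k) ^ 2 := by
          rw [mul_inv_le_iff₀ ht] at hterm
          linarith
        have hquot : ε k / (4 * (k : ℝ) * C) ≤ (momentC c k x - mstar k) ^ 2 := by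
          rw [div_le_iff₀ (by have := hkpos k hk; positivity)]
          have hk' := hkpos k hk
          rw [div_le_iff₀ (by positivity : (0:ℝ) < 4 * (k:ℝ))] at hCt
          nlinarith [hCt]
        have := Real.sqrt_le_sqrt hquot
        rw [Real.sqrt_sq hmt.le] at this
        simp only [hδ]
        linarith
      · rintro ⟨h1, h2⟩
        exact ⟨fun k hk => lt_of_lt_of_le
          (lt_add_of_pos_right _ (hδpos k hk)) (h1 k hk), h2⟩
    rw [show {x : Fin n → Fin d → ℝ |
        (∀ k ∈ Finset.Icc 1 s, mstar k < momentC c k x) ∧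
        (∑ k ∈ Finset.Icc 1 s, (1 / (4 * (k : ℝ))) * (momentC c k x - mstar k) ^ 2) +
          (∑ k ∈ Finset.Icc 1 s, (ε k / (4 * (k : ℝ))) * ((momentC c k x - mstar k) ^ 2)⁻¹)
          ≤ C} = K ∩ g ⁻¹' Set.Iic C from hset]
    have hK : IsClosed K := by
      have : K = ⋂ k ∈ Finset.Icc 1 s, {x | mstar k + δ k ≤ momentC c k x} := by
        ext x; simp [hKdef, Set.mem_iInter]
      rw [this]
      exact isClosed_biInter fun k hk =>
        isClosed_le continuous_const (continuous_momentC c k)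
    have hgc : ContinuousOn g K := by
      apply ContinuousOn.add
      · exact (continuous_finset_sum _ fun k _ =>
          continuous_const.mul
            (((continuous_momentC c k).sub continuous_const).pow 2)).continuousOn
      · apply continuousOn_finset_sum
        intro k hk
        apply ContinuousOn.mul continuousOn_const
        apply ContinuousOn.inv₀
          (((continuous_momentC c k).sub continuous_const).pow 2).continuousOn
        intro x hx
        have := lt_of_lt_of_le (lt_add_of_pos_right _ (hδpos k hk)) (hx k hk)
        have h2 : 0 < momentC c k x - mstar k := sub_pos.mpr this
        exact pow_ne_zero 2 h2.ne'
    exact hgc.preimage_isClosed_of_isClosed hK isClosed_Iic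
  · push_neg at hC
    convert isClosed_empty
    ext x
    simp only [Set.mem_setOf_eq, Set.mem_empty_iff_false, iff_false, not_and]
    intro h1
    have hfn : 0 ≤ ∑ k ∈ Finset.Icc 1 s,
        (1 / (4 * (k : ℝ))) * (momentC c k x - mstar k) ^ 2 := by
      apply Finset.sum_nonneg
      intro j hj
      have := hkpos j hj
      positivity
    have hbp : 0 < ∑ k ∈ Finset.Icc 1 s,
        (ε k / (4 * (k : ℝ))) * ((momentC c k x - mstar k) ^ 2)⁻¹ := by
      apply Finset.sum_pos
      · intro j hj
        have h2 : 0 < momentC c j x - mstar j := sub_pos.mpr (h1 j hj)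
        have := hkpos j hj
        have := hε j hj
        positivity
      · exact ⟨1, Finset.mem_Icc.mpr ⟨le_refl 1, hs1⟩⟩
    intro h2
    linarith
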